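/- The element -1 is a norm from Q_2(sqrt(n)) to Q_2 for n in {1, 2, -3, -6} and is not a norm for n in {-1, -2, 3, 6}, where n ranges over representatives of the nontrivial classes of Q_2*/(Q_2*)^2 together with 1. -/

import Mathlib

open PadicInt Polynomial

-- a square root of -7 in ℤ_[2] via Hensel's lemma
lemma exists_sqrt_neg7 : ∃ s : ℤ_[2], s ^ 2 = -7 := by
  have h2 : ‖(2 : ℤ_[2])‖ = (2 : ℝ)⁻¹ := by
    have := @PadicInt.norm_p 2 _
    norm_num at this ⊢
    exact_mod_cast this
  have hnorm : ‖(X ^ 2 + C 7 : Polynomial ℤ_[2]).eval 1‖ <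
      ‖(X ^ 2 + C 7 : Polynomial ℤ_[2]).derivative.eval 1‖ ^ 2 := by
    have e1 : (X ^ 2 + C 7 : Polynomial ℤ_[2]).eval 1 = 8 := by simp; norm_num
    have e2 : (X ^ 2 + C 7 : Polynomial ℤ_[2]).derivative.eval 1 = 2 := by
      simp [derivative_X_pow]; norm_num
    rw [e1, e2]
    have h8 : ‖(8 : ℤ_[2])‖ = ((2:ℝ)⁻¹) ^ 3 := by
      have : (8 : ℤ_[2]) = 2 ^ 3 := by norm_num
      rw [this, norm_pow, h2]
    rw [h8, h2]
    norm_num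
  obtain ⟨z, hz, -⟩ := hensels_lemma hnorm
  refine ⟨z, ?_⟩
  simp at hz
  linear_combination hz

lemma mod8_forces_even (n : ℤ) (hn : n = -1 ∨ n = -2 ∨ n = 3 ∨ n = 6)
    (x y z : ZMod 8) (h : x ^ 2 - (n : ZMod 8) * y ^ 2 + z ^ 2 = 0) :
    (2 : ZMod 8) ∣ x ∧ (2 : ZMod 8) ∣ y ∧ (2 : ZMod 8) ∣ z := by
  have key : x.val % 2 = 0 ∧ y.val % 2 = 0 ∧ z.val % 2 = 0 := by
    rcases hn with rfl | rfl | rfl | rfl <;> push_cast at h <;> revert h <;> revert x y z <;> decide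
  have hdvd : ∀ w : ZMod 8, w.val % 2 = 0 → (2 : ZMod 8) ∣ w := by
    intro w hw
    obtain ⟨k, hk⟩ := Nat.dvd_of_mod_eq_zero hw
    refine ⟨(k : ZMod 8), ?_⟩
    have := ZMod.natCast_rightInverse (n := 8) w
    rw [← this, hk]
    push_cast
    ring
  exact ⟨hdvd x key.1, hdvd y key.2.1, hdvd z key.2.2⟩

lemma dvd_of_image_dvd {x : ℤ_[2]} (h : (2 : ZMod (2 ^ 3)) ∣ PadicInt.toZModPow 3 x) :
    (2 : ℤ_[2]) ∣ x := by
  obtain ⟨c, hc⟩ := h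
  obtain ⟨m, rfl⟩ := ZMod.intCast_surjective c
  have h0 : PadicInt.toZModPow 3 (x - 2 * (m : ℤ_[2])) = 0 := by
    rw [map_sub, map_mul, map_intCast, map_ofNat, hc]
    ring
  have hk : x - 2 * (m : ℤ_[2]) ∈ RingHom.ker (PadicInt.toZModPow 3 (p := 2)) := h0
  rw [PadicInt.ker_toZModPow, Ideal.mem_span_singleton] at hk
  obtain ⟨d, hd⟩ := hk
  exact ⟨(m : ℤ_[2]) + 2 ^ 2 * d, by linear_combination hd⟩

lemma not_norm (n : ℤ) (hn : n = -1 ∨ n = -2 ∨ n = 3 ∨ n = 6) :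
    ¬ ∃ a b : ℚ_[2], a ^ 2 - (n : ℚ_[2]) * b ^ 2 = -1 := by
  rintro ⟨a, b, hab⟩
  obtain ⟨t, htab, hta, htb, ht1⟩ : ∃ t : ℚ_[2], (t = a ∨ t = b ∨ t = 1) ∧
      ‖a‖ ≤ ‖t‖ ∧ ‖b‖ ≤ ‖t‖ ∧ 1 ≤ ‖t‖ := by
    rcases le_total ‖a‖ ‖b‖ with h | h
    · rcases le_total ‖b‖ 1 with h' | h'
      · refine ⟨1, Or.inr (Or.inr rfl), ?_, ?_, ?_⟩ <;> simp <;> linarith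
      · exact ⟨b, Or.inr (Or.inl rfl), h, le_refl _, h'⟩
    · rcases le_total ‖a‖ 1 with h' | h'
      · refine ⟨1, Or.inr (Or.inr rfl), ?_, ?_, ?_⟩ <;> simp <;> linarith
      · exact ⟨a, Or.inl rfl, le_refl _, h, h'⟩
  have ht0 : t ≠ 0 := by
    intro h; rw [h, norm_zero] at ht1; linarith
  have ht0' : ‖t‖ > 0 := by positivity
  have hX : ‖a / t‖ ≤ 1 := by rw [norm_div]; exact div_le_one_of_le₀ hta (le_of_lt ht0')
  have hY : ‖b / t‖ ≤ 1 := by rw [norm_div]; exact div_le_one_of_le₀ htb (le_of_lt ht0')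
  have hZ : ‖1 / t‖ ≤ 1 := by
    rw [norm_div, norm_one]; exact div_le_one_of_le₀ ht1 (le_of_lt ht0')
  set X : ℤ_[2] := ⟨a / t, hX⟩
  set Y : ℤ_[2] := ⟨b / t, hY⟩
  set Z : ℤ_[2] := ⟨1 / t, hZ⟩
  have heqQ : (a / t) ^ 2 - (n : ℚ_[2]) * (b / t) ^ 2 + (1 / t) ^ 2 = 0 := by
    field_simp
    linear_combination hab
  have heq : X ^ 2 - (n : ℤ_[2]) * Y ^ 2 + Z ^ 2 = 0 := by
    have : ((X ^ 2 - (n : ℤ_[2]) * Y ^ 2 + Z ^ 2 : ℤ_[2]) : ℚ_[2]) = 0 := by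
      push_cast
      exact heqQ
    exact Subtype.coe_injective this
  have hmod : (PadicInt.toZModPow 3 X) ^ 2 - (n : ZMod (2 ^ 3)) * (PadicInt.toZModPow 3 Y) ^ 2
      + (PadicInt.toZModPow 3 Z) ^ 2 = 0 := by
    have := congrArg (PadicInt.toZModPow 3) heq
    rw [map_add, map_sub, map_mul, map_pow, map_pow, map_pow, map_intCast, map_zero] at this
    exact this
  obtain ⟨hdx, hdy, hdz⟩ := mod8_forces_even n hn _ _ _ hmod
  have hnx : ‖X‖ < 1 := by
    rw [PadicInt.norm_lt_one_iff_dvd]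
    exact_mod_cast dvd_of_image_dvd hdx
  have hny : ‖Y‖ < 1 := by
    rw [PadicInt.norm_lt_one_iff_dvd]
    exact_mod_cast dvd_of_image_dvd hdy
  have hnz : ‖Z‖ < 1 := by
    rw [PadicInt.norm_lt_one_iff_dvd]
    exact_mod_cast dvd_of_image_dvd hdz
  have hXn : ‖X‖ = ‖a / t‖ := rfl
  have hYn : ‖Y‖ = ‖b / t‖ := rfl
  have hZn : ‖Z‖ = ‖1 / t‖ := rfl
  rcases htab with rfl | rfl | rfl
  · rw [hXn, div_self ht0, norm_one] at hnx; linarith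
  · rw [hYn, div_self ht0, norm_one] at hny; linarith
  · rw [hZn, div_self ht0, norm_one] at hnz; linarith


/- STATEMENT 5.  `-1` is a norm from `ℚ₂(√n)` to `ℚ₂` (i.e. `-1 = a² - n b²` has a
solution in `ℚ₂`) for `n ∈ {1, 2, -3, -6}`, and is not a norm for `n ∈ {-1, -2, 3, 6}`. -/
theorem stmt5 (n : ℤ) :
    ((n = 1 ∨ n = 2 ∨ n = -3 ∨ n = -6) →
      ∃ a b : ℚ_[2], a ^ 2 - (n : ℚ_[2]) * b ^ 2 = -1) ∧
    ((n = -1 ∨ n = -2 ∨ n = 3 ∨ n = 6) →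
      ¬ ∃ a b : ℚ_[2], a ^ 2 - (n : ℚ_[2]) * b ^ 2 = -1) := by
  constructor
  · intro hn
    obtain ⟨s, hs⟩ := exists_sqrt_neg7
    have hsQ : ((s : ℚ_[2])) ^ 2 = -7 := by
      have : ((s ^ 2 : ℤ_[2]) : ℚ_[2]) = ((-7 : ℤ_[2]) : ℚ_[2]) := by exact_mod_cast congrArg _ hs
      push_cast at this
      exact this
    rcases hn with rfl | rfl | rfl | rfl
    · exact ⟨0, 1, by norm_num⟩
    · exact ⟨1, 1, by norm_num⟩
    · refine ⟨(s : ℚ_[2]) / 2, 1 / 2, ?_⟩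
      push_cast
      have h2 : (2 : ℚ_[2]) ≠ 0 := two_ne_zero
      field_simp
      linear_combination hsQ
    · refine ⟨(s : ℚ_[2]), 1, ?_⟩
      push_cast
      linear_combination hsQ
  · exact not_norm n
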